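/- For every x ∈ ℝ with x ≥ 1: the U-trajectory of x tends to {1, 2} if, and only if, there exists k ∈ ℕ such that U^k(x) ∈ [1, 3). -/
import Mathlib

open Filter

/-- The real 3x+1 function: `Ux = x/2` if `⌊x⌋` is even, `(3x+1)/2` if `⌊x⌋` is odd. -/
noncomputable def U (x : ℝ) : ℝ := if Even ⌊x⌋ then x / 2 else (3 * x + 1) / 2

lemma U_floor_even (y : ℝ) (n : ℤ) (hn : Even n) (h1 : (n : ℝ) ≤ y) (h2 : y < n + 1) :
    U y = y / 2 := by
  have hf : ⌊y⌋ = n := Int.floor_eq_iff.mpr ⟨h1, by push_cast; linarith⟩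
  simp [U, hf, hn]

lemma U_floor_odd (y : ℝ) (n : ℤ) (hn : ¬ Even n) (h1 : (n : ℝ) ≤ y) (h2 : y < n + 1) :
    U y = (3 * y + 1) / 2 := by
  have hf : ⌊y⌋ = n := Int.floor_eq_iff.mpr ⟨h1, by push_cast; linarith⟩
  simp [U, hf, hn]

lemma U_ge_one {y : ℝ} (hy : 1 ≤ y) : 1 ≤ U y := by
  unfold U
  by_cases h : Even ⌊y⌋
  · have h1 : (1 : ℤ) ≤ ⌊y⌋ := Int.le_floor.mpr (by exact_mod_cast hy)
    have h2 : (2 : ℤ) ≤ ⌊y⌋ := by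
      obtain ⟨r, hr⟩ := h; omega
    have : (2 : ℝ) ≤ ⌊y⌋ := by exact_mod_cast h2
    have := Int.floor_le y
    simp only [if_pos h]
    linarith
  · simp only [if_neg h]
    linarith

lemma iter_ge_one (x : ℝ) (hx : 1 ≤ x) : ∀ k, 1 ≤ U^[k] x := by
  intro k
  induction k with
  | zero => simpa using hx
  | succ n ih => rw [Function.iterate_succ_apply']; exact U_ge_one ih

lemma U_A {y : ℝ} (h1 : 1 ≤ y) (h2 : y < 3 / 2) : U y = (3 * y + 1) / 2 :=
  U_floor_odd y 1 (by norm_num) (by push_cast; linarith) (by push_cast; linarith)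

lemma U2_A {y : ℝ} (h1 : 1 ≤ y) (h2 : y < 3 / 2) : U^[2] y = (3 * y + 1) / 4 := by
  rw [show U^[2] y = U (U^[1] y) from Function.iterate_succ_apply' U 1 y, Function.iterate_one,
    U_A h1 h2, U_floor_even _ 2 (by decide) (by push_cast; linarith) (by push_cast; linarith)]
  ring

lemma iterA {y : ℝ} (h1 : 1 ≤ y) (h2 : y < 3 / 2) :
    ∀ n, U^[2 * n] y = 1 + (3 / 4) ^ n * (y - 1) ∧ 1 ≤ U^[2 * n] y ∧ U^[2 * n] y < 3 / 2 := by
  intro n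
  induction n with
  | zero =>
    refine ⟨by simp, by simpa using h1, by simpa using h2⟩
  | succ n ih =>
    obtain ⟨hf, hlo, hhi⟩ := ih
    have hstep : U^[2 * (n + 1)] y = (3 * U^[2 * n] y + 1) / 4 := by
      rw [show 2 * (n + 1) = 2 + 2 * n from by ring, Function.iterate_add_apply,
        U2_A hlo hhi]
    have hf' : U^[2 * (n + 1)] y = 1 + (3 / 4) ^ (n + 1) * (y - 1) := by
      rw [hstep, hf]; ring
    have hp : (0 : ℝ) ≤ (3 / 4 : ℝ) ^ (n + 1) := by positivity
    have hq : (3 / 4 : ℝ) ^ (n + 1) ≤ 1 := pow_le_one₀ (by norm_num) (by norm_num)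
    refine ⟨hf', ?_, ?_⟩
    · rw [hf']; nlinarith
    · rw [hf']; nlinarith

lemma convA {y : ℝ} (h1 : 1 ≤ y) (h2 : y < 3 / 2) :
    Tendsto (fun n : ℕ => U^[2 * n] y) atTop (nhds 1) ∧
    Tendsto (fun n : ℕ => U^[2 * n + 1] y) atTop (nhds 2) := by
  have hpow : Tendsto (fun n : ℕ => (3 / 4 : ℝ) ^ n) atTop (nhds 0) :=
    tendsto_pow_atTop_nhds_zero_of_lt_one (by norm_num) (by norm_num)
  have te : Tendsto (fun n : ℕ => U^[2 * n] y) atTop (nhds 1) := by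
    have t1 : Tendsto (fun n : ℕ => 1 + (3 / 4 : ℝ) ^ n * (y - 1)) atTop
        (nhds (1 + 0 * (y - 1))) := ((hpow.mul_const (y - 1)).const_add 1)
    have : (1 : ℝ) + 0 * (y - 1) = 1 := by ring
    rw [this] at t1
    exact t1.congr (fun n => ((iterA h1 h2 n).1).symm)
  refine ⟨te, ?_⟩
  have to' : Tendsto (fun n : ℕ => (3 * U^[2 * n] y + 1) / 2) atTop
      (nhds ((3 * 1 + 1) / 2)) := ((te.const_mul 3).add_const 1).div_const 2
  have h4 : ((3 : ℝ) * 1 + 1) / 2 = 2 := by norm_num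
  rw [h4] at to'
  refine to'.congr fun n => ?_
  have := iterA h1 h2 n
  rw [Function.iterate_succ_apply', U_A this.2.1 this.2.2]

lemma tendsto_shift (g : ℕ → ℝ) (m : ℕ) {a : ℝ} (h : Tendsto g atTop (nhds a))
    (f : ℕ → ℝ) (hf : ∀ k, m ≤ k → f k = g (k - m)) : Tendsto f atTop (nhds a) :=
  (h.comp (tendsto_sub_atTop_nat m)).congr'
    (eventually_atTop.2 ⟨m, fun k hk => (hf k hk).symm⟩)

lemma convB {z : ℝ} (h1 : 2 ≤ z) (h2 : z < 3) :
    Tendsto (fun n : ℕ => U^[2 * n] z) atTop (nhds 2) ∧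
    Tendsto (fun n : ℕ => U^[2 * n + 1] z) atTop (nhds 1) := by
  have hUz : U z = z / 2 :=
    U_floor_even z 2 (by norm_num) (by push_cast; linarith) (by push_cast; linarith)
  have hz1 : 1 ≤ U z := by rw [hUz]; linarith
  have hz2 : U z < 3 / 2 := by rw [hUz]; linarith
  obtain ⟨tA, tB⟩ := convA hz1 hz2
  constructor
  · refine tendsto_shift (fun n => U^[2 * n + 1] (U z)) 1 tB _ fun k hk => ?_
    show U^[2 * k] z = U^[2 * (k - 1) + 1] (U z)
    rw [← Function.iterate_succ_apply]
    congr 1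
    omega
  · exact tA.congr fun n => (Function.iterate_succ_apply U (2 * n) z).symm

lemma reach (x : ℝ) (hx1 : 1 ≤ x) (hx2 : x < 3) :
    ∃ m, U^[m] x ∈ Set.Ico (1 : ℝ) (3 / 2) ∨ U^[m] x ∈ Set.Ico (2 : ℝ) 3 := by
  rcases lt_or_ge x (3 / 2) with h | hA
  · exact ⟨0, Or.inl ⟨hx1, h⟩⟩
  rcases le_or_gt 2 x with hB | hB
  · exact ⟨0, Or.inr ⟨hB, hx2⟩⟩
  rcases lt_or_ge x (5 / 3) with h1 | h1
  · have hu : U^[1] x = (3 * x + 1) / 2 := by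
      rw [Function.iterate_one, U_floor_odd _ 1 (by decide) (by push_cast; linarith) (by push_cast; linarith)]
    exact ⟨1, Or.inr ⟨by rw [hu]; linarith, by rw [hu]; linarith⟩⟩
  rcases lt_or_ge x (53 / 27) with h2 | h2
  · -- branch [5/3, 53/27)
    have h1 : U^[1] x = (3*x+1)/2 := by
      rw [Function.iterate_one, U_floor_odd _ 1 (by decide) (by push_cast; linarith) (by push_cast; linarith)]
    have h2 : U^[2] x = (9*x+5)/4 := by
      rw [show U^[2] x = U (U^[1] x) from Function.iterate_succ_apply' U 1 x, h1, U_floor_odd _ 3 (by decide) (by push_cast; linarith) (by push_cast; linarith)]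
      ring
    have h3 : U^[3] x = (27*x+19)/8 := by
      rw [show U^[3] x = U (U^[2] x) from Function.iterate_succ_apply' U 2 x, h2, U_floor_odd _ 5 (by decide) (by push_cast; linarith) (by push_cast; linarith)]
      ring
    have h4 : U^[4] x = (27*x+19)/16 := by
      rw [show U^[4] x = U (U^[3] x) from Function.iterate_succ_apply' U 3 x, h3, U_floor_even _ 8 (by decide) (by push_cast; linarith) (by push_cast; linarith)]
      ring
    have h5 : U^[5] x = (27*x+19)/32 := by
      rw [show U^[5] x = U (U^[4] x) from Function.iterate_succ_apply' U 4 x, h4, U_floor_even _ 4 (by decide) (by push_cast; linarith) (by push_cast; linarith)]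
      ring
    exact ⟨5, Or.inr ⟨by rw [h5]; linarith, by rw [h5]; linarith⟩⟩
  · -- branch [53/27, 2)
    have h1 : U^[1] x = (3*x+1)/2 := by
      rw [Function.iterate_one, U_floor_odd _ 1 (by decide) (by push_cast; linarith) (by push_cast; linarith)]
    have h2 : U^[2] x = (9*x+5)/4 := by
      rw [show U^[2] x = U (U^[1] x) from Function.iterate_succ_apply' U 1 x, h1, U_floor_odd _ 3 (by decide) (by push_cast; linarith) (by push_cast; linarith)]
      ring
    have h3 : U^[3] x = (27*x+19)/8 := by
      rw [show U^[3] x = U (U^[2] x) from Function.iterate_succ_apply' U 2 x, h2, U_floor_odd _ 5 (by decide) (by push_cast; linarith) (by push_cast; linarith)]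
      ring
    have h4 : U^[4] x = (81*x+65)/16 := by
      rw [show U^[4] x = U (U^[3] x) from Function.iterate_succ_apply' U 3 x, h3, U_floor_odd _ 9 (by decide) (by push_cast; linarith) (by push_cast; linarith)]
      ring
    have h5 : U^[5] x = (81*x+65)/32 := by
      rw [show U^[5] x = U (U^[4] x) from Function.iterate_succ_apply' U 4 x, h4, U_floor_even _ 14 (by decide) (by push_cast; linarith) (by push_cast; linarith)]
      ring
    have h6 : U^[6] x = (243*x+227)/64 := by
      rw [show U^[6] x = U (U^[5] x) from Function.iterate_succ_apply' U 5 x, h5, U_floor_odd _ 7 (by decide) (by push_cast; linarith) (by push_cast; linarith)]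
      ring
    have h7 : U^[7] x = (729*x+745)/128 := by
      rw [show U^[7] x = U (U^[6] x) from Function.iterate_succ_apply' U 6 x, h6, U_floor_odd _ 11 (by decide) (by push_cast; linarith) (by push_cast; linarith)]
      ring
    have h8 : U^[8] x = (2187*x+2363)/256 := by
      rw [show U^[8] x = U (U^[7] x) from Function.iterate_succ_apply' U 7 x, h7, U_floor_odd _ 17 (by decide) (by push_cast; linarith) (by push_cast; linarith)]
      ring
    have h9 : U^[9] x = (2187*x+2363)/512 := by
      rw [show U^[9] x = U (U^[8] x) from Function.iterate_succ_apply' U 8 x, h8, U_floor_even _ 26 (by decide) (by push_cast; linarith) (by push_cast; linarith)]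
      ring
    have h10 : U^[10] x = (6561*x+7601)/1024 := by
      rw [show U^[10] x = U (U^[9] x) from Function.iterate_succ_apply' U 9 x, h9, U_floor_odd _ 13 (by decide) (by push_cast; linarith) (by push_cast; linarith)]
      ring
    have h11 : U^[11] x = (6561*x+7601)/2048 := by
      rw [show U^[11] x = U (U^[10] x) from Function.iterate_succ_apply' U 10 x, h10, U_floor_even _ 20 (by decide) (by push_cast; linarith) (by push_cast; linarith)]
      ring
    have h12 : U^[12] x = (6561*x+7601)/4096 := by
      rw [show U^[12] x = U (U^[11] x) from Function.iterate_succ_apply' U 11 x, h11, U_floor_even _ 10 (by decide) (by push_cast; linarith) (by push_cast; linarith)]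
      ring
    have h13 : U^[13] x = (19683*x+26899)/8192 := by
      rw [show U^[13] x = U (U^[12] x) from Function.iterate_succ_apply' U 12 x, h12, U_floor_odd _ 5 (by decide) (by push_cast; linarith) (by push_cast; linarith)]
      ring
    have h14 : U^[14] x = (19683*x+26899)/16384 := by
      rw [show U^[14] x = U (U^[13] x) from Function.iterate_succ_apply' U 13 x, h13, U_floor_even _ 8 (by decide) (by push_cast; linarith) (by push_cast; linarith)]
      ring
    have h15 : U^[15] x = (19683*x+26899)/32768 := by
      rw [show U^[15] x = U (U^[14] x) from Function.iterate_succ_apply' U 14 x, h14, U_floor_even _ 4 (by decide) (by push_cast; linarith) (by push_cast; linarith)]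
      ring
    exact ⟨15, Or.inr ⟨by rw [h15]; linarith, by rw [h15]; linarith⟩⟩

/-- For all `x ≥ 1`, the `U`-trajectory of `x` tends to `{1, 2}` iff some iterate of `x`
lands in `[1, 3)`. -/
theorem tendsto_one_two_iff_hits_Ico (x : ℝ) (hx : 1 ≤ x) :
    (∃ L₀ L₁ : ℝ,
        Filter.Tendsto (fun k : ℕ => U^[2 * k] x) Filter.atTop (nhds L₀) ∧
        Filter.Tendsto (fun k : ℕ => U^[2 * k + 1] x) Filter.atTop (nhds L₁) ∧
        ({L₀, L₁} : Set ℝ) = {1, 2}) ↔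
    (∃ k : ℕ, U^[k] x ∈ Set.Ico (1 : ℝ) 3) := by
  constructor
  · rintro ⟨L₀, L₁, h0, _h1, hset⟩
    have hmem : L₀ ∈ ({1, 2} : Set ℝ) := by
      rw [← hset]; exact Set.mem_insert _ _
    have hlt : L₀ < 3 := by
      rcases hmem with h | h
      · rw [h]; norm_num
      · rw [Set.mem_singleton_iff] at h; rw [h]; norm_num
    obtain ⟨k, hk⟩ := (h0.eventually_lt_const hlt).exists
    exact ⟨2 * k, iter_ge_one x hx _, hk⟩
  · rintro ⟨k, hk1, hk2⟩
    obtain ⟨m, hm⟩ := reach (U^[k] x) hk1 hk2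
    rw [← Function.iterate_add_apply] at hm
    set j := m + k with hj
    have hconv : ∃ a b : ℝ,
        Tendsto (fun n : ℕ => U^[2 * n] (U^[j] x)) atTop (nhds a) ∧
        Tendsto (fun n : ℕ => U^[2 * n + 1] (U^[j] x)) atTop (nhds b) ∧
        ({a, b} : Set ℝ) = {1, 2} := by
      rcases hm with ⟨ha1, ha2⟩ | ⟨hb1, hb2⟩
      · obtain ⟨t0, t1⟩ := convA ha1 ha2
        exact ⟨1, 2, t0, t1, rfl⟩
      · obtain ⟨t0, t1⟩ := convB hb1 hb2
        exact ⟨2, 1, t0, t1, Set.pair_comm 2 1⟩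
    obtain ⟨a, b, ta, tb, hab⟩ := hconv
    rcases Nat.even_or_odd j with ⟨r, hr⟩ | ⟨r, hr⟩
    · refine ⟨a, b, ?_, ?_, hab⟩
      · refine tendsto_shift _ r ta _ fun k hk => ?_
        show U^[2 * k] x = U^[2 * (k - r)] (U^[j] x)
        rw [← Function.iterate_add_apply]
        congr 1
        omega
      · refine tendsto_shift _ r tb _ fun k hk => ?_
        show U^[2 * k + 1] x = U^[2 * (k - r) + 1] (U^[j] x)
        rw [← Function.iterate_add_apply]
        congr 1
        omega
    · refine ⟨b, a, ?_, ?_, ?_⟩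
      · refine tendsto_shift _ (r + 1) tb _ fun k hk => ?_
        show U^[2 * k] x = U^[2 * (k - (r + 1)) + 1] (U^[j] x)
        rw [← Function.iterate_add_apply]
        congr 1
        omega
      · refine tendsto_shift _ r ta _ fun k hk => ?_
        show U^[2 * k + 1] x = U^[2 * (k - r)] (U^[j] x)
        rw [← Function.iterate_add_apply]
        congr 1
        omega
      · rw [Set.pair_comm]; exact hab
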